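/- Let q̂ be a probability vector on the finite alphabet 𝒳, let s be a probability measure on the nonnegative integers with mean z = Σ_n n s(n) > 0, and for each n ≥ 1 let v_n be a probability measure on 𝒳ⁿ with marginals v_{n,1},…,v_{n,n}. Then Σ_{n=1}^∞ s(n) H(v_n ‖ q̂ⁿ) ≥ Σ_{n=1}^∞ s(n) Σ_{i=1}^n H(v_{n,i} ‖ q̂) ≥ z H( z^{-1} Σ_{n=1}^∞ s(n) Σ_{i=1}^n v_{n,i} ‖ q̂ ), with equality throughout whenever v_n = ∏_{i=1}^n v_{n,i} with all v_{n,i} equal to a single probability measure independent of n and i. -/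

import Mathlib

open scoped ENNReal NNReal Classical
open Filter

namespace GWLD

/-! ### The space `𝒳* = ⋃ₙ {n} × 𝒳ⁿ` of offspring configurations -/

/-- `𝒳* = ⋃ₙ {n} × 𝒳ⁿ`, with the discrete topology (it is a countable type). -/
abbrev XStar (𝒳 : Type) : Type := Σ n : ℕ, Fin n → 𝒳

/-- the multiplicity `m(b,c)` of the symbol `b` in `c = (n, a₁, …, aₙ)`. -/
noncomputable def mult {𝒳 : Type} (b : 𝒳) (c : XStar 𝒳) : ℕ :=
  (Finset.univ.filter fun i : Fin c.1 => c.2 i = b).card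

/-! ### Finite rooted planar typed trees -/

/-- A finite rooted planar tree, each vertex carrying a type from `𝒳`. -/
inductive TypedTree (𝒳 : Type) where
  | node : 𝒳 → List (TypedTree 𝒳) → TypedTree 𝒳

namespace TypedTree

variable {𝒳 : Type}

/-- the type of the root. -/
def rootType : TypedTree 𝒳 → 𝒳
  | node a _ => a

mutual
  /-- the number `|T|` of vertices of the tree. -/
  def size : TypedTree 𝒳 → ℕ
    | node _ ts => 1 + sizeList ts
  def sizeList : List (TypedTree 𝒳) → ℕ
    | [] => 0
    | t :: ts => size t + sizeList ts
end

/-- the element of `𝒳*` recording the number and types of the roots of a list of trees;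
`spec ts = C(v)` when `ts` is the list of subtrees hanging off the vertex `v`. -/
def spec (ts : List (TypedTree 𝒳)) : XStar 𝒳 :=
  ⟨ts.length, fun i => rootType (ts.get i)⟩

mutual
  /-- `offCount t (a,c) = #{v ∈ V : (X(v), C(v)) = (a,c)}`. -/
  noncomputable def offCount : TypedTree 𝒳 → 𝒳 × XStar 𝒳 → ℕ
    | node a ts, p => (if p = (a, spec ts) then 1 else 0) + offCountList ts p
  noncomputable def offCountList : List (TypedTree 𝒳) → 𝒳 × XStar 𝒳 → ℕ
    | [], _ => 0
    | t :: ts, p => offCount t p + offCountList ts p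
end

mutual
  /-- `pairCount t (a,b) = #{e ∈ E : (X(e₁), X(e₂)) = (a,b)}`. -/
  noncomputable def pairCount : TypedTree 𝒳 → 𝒳 × 𝒳 → ℕ
    | node a ts, p =>
        (ts.map fun s => if p = (a, rootType s) then 1 else 0).sum + pairCountList ts p
  noncomputable def pairCountList : List (TypedTree 𝒳) → 𝒳 × 𝒳 → ℕ
    | [], _ => 0
    | t :: ts, p => pairCount t p + pairCountList ts p
end

mutual
  /-- `∏_{v ∈ V} ℚ{C(v) | X(v)}`. -/
  noncomputable def treeWeight (Q : 𝒳 → XStar 𝒳 → ℝ) : TypedTree 𝒳 → ℝ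
    | node a ts => Q a (spec ts) * treeWeightList Q ts
  noncomputable def treeWeightList (Q : 𝒳 → XStar 𝒳 → ℝ) : List (TypedTree 𝒳) → ℝ
    | [] => 1
    | t :: ts => treeWeight Q t * treeWeightList Q ts
end

end TypedTree

open TypedTree

variable {𝒳 : Type}

/-! ### Empirical measures -/

/-- the empirical offspring measure `M_X`. -/
noncomputable def MX (t : TypedTree 𝒳) : 𝒳 × XStar 𝒳 → ℝ :=
  fun p => (offCount t p : ℝ) / (size t : ℝ)

/-- the empirical pair measure `L̃_X` (normalised by the number of vertices). -/
noncomputable def LtX (t : TypedTree 𝒳) : 𝒳 × 𝒳 → ℝ :=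
  fun p => (pairCount t p : ℝ) / (size t : ℝ)

/-- the empirical pair measure `L_X` (normalised by the number `|T| - 1` of edges). -/
noncomputable def LX (t : TypedTree 𝒳) : 𝒳 × 𝒳 → ℝ :=
  fun p => (pairCount t p : ℝ) / ((size t : ℝ) - 1)

/-! ### The law of a multitype Galton-Watson tree and conditioning on the total size -/

/-- the probability that the multitype Galton-Watson tree with initial law `μ` and
offspring kernel `Q` produces exactly the typed tree `t`. -/
noncomputable def gwLaw (μ : 𝒳 → ℝ) (Q : 𝒳 → XStar 𝒳 → ℝ) (t : TypedTree 𝒳) : ℝ :=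
  μ (rootType t) * treeWeight Q t

/-- `P{|T| = n}`. -/
noncomputable def partSum (μ : 𝒳 → ℝ) (Q : 𝒳 → XStar 𝒳 → ℝ) (n : ℕ) : ℝ :=
  ∑' t : TypedTree 𝒳, if size t = n then gwLaw μ Q t else 0

/-- `P{X ∈ A | |T| = n}`. -/
noncomputable def condProb (μ : 𝒳 → ℝ) (Q : 𝒳 → XStar 𝒳 → ℝ)
    (A : Set (TypedTree 𝒳)) (n : ℕ) : ℝ :=
  (∑' t : TypedTree 𝒳, if size t = n ∧ t ∈ A then gwLaw μ Q t else 0) / partSum μ Q n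

/-- `n → ∞` along those `n` for which `P{|T| = n} > 0`. -/
noncomputable def condFilter (μ : 𝒳 → ℝ) (Q : 𝒳 → XStar 𝒳 → ℝ) : Filter ℕ :=
  Filter.atTop ⊓ Filter.principal {n : ℕ | 0 < partSum μ Q n}

/-! ### Large deviation principles -/

/-- extended logarithm, `elog x = -∞` for `x ≤ 0`. -/
noncomputable def elog (x : ℝ) : EReal := if x ≤ 0 then (⊥ : EReal) else ((Real.log x : ℝ) : EReal)

/-- A family `P n` of (conditional) probabilities on a topological space `S` satisfies a
large deviation principle with speed `n`, along the filter `L`, with rate function `I`. -/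
def HasLDP {S : Type*} [TopologicalSpace S] (P : ℕ → Set S → ℝ) (L : Filter ℕ)
    (I : S → ℝ≥0∞) : Prop :=
  (∀ F : Set S, IsClosed F →
      Filter.limsup (fun n : ℕ => (((n : ℝ)⁻¹ : ℝ) : EReal) * elog (P n F)) L
        ≤ -(⨅ x ∈ F, (I x : EReal))) ∧
  (∀ G : Set S, IsOpen G →
      -(⨅ x ∈ G, (I x : EReal))
        ≤ Filter.liminf (fun n : ℕ => (((n : ℝ)⁻¹ : ℝ) : EReal) * elog (P n G)) L)

/-- a good rate function: lower semicontinuous with compact sublevel sets. -/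
def IsGoodRate {S : Type*} [TopologicalSpace S] (I : S → ℝ≥0∞) : Prop :=
  LowerSemicontinuous I ∧ ∀ c : ℝ≥0∞, c ≠ ⊤ → IsCompact {x : S | I x ≤ c}

/-! ### Relative entropy -/

/-- relative entropy `H(ν ‖ μ)` of two (probability) mass functions on a countable set,
written via `φ(x) = x log x - x + 1` so that all summands are nonnegative. -/
noncomputable def relEnt {α : Type*} (ν μ : α → ℝ) : ℝ≥0∞ :=
  if ∀ x, μ x = 0 → ν x = 0 then
    ∑' x, ENNReal.ofReal (ν x * Real.log (ν x / μ x) - ν x + μ x)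
  else ⊤

/-! ### Probability vectors and offspring kernels -/

/-- a probability mass function. -/
def IsProbVec {α : Type*} (μ : α → ℝ) : Prop := (∀ a, 0 ≤ μ a) ∧ HasSum μ 1

/-- an offspring transition kernel from `𝒳` to `𝒳*`. -/
def IsKernel (Q : 𝒳 → XStar 𝒳 → ℝ) : Prop :=
  (∀ a c, 0 ≤ Q a c) ∧ ∀ a, HasSum (Q a) 1

/-- the offspring numbers have finite second moment under `Q{·|a}` for every `a`. -/
def FiniteSecondMoment (Q : 𝒳 → XStar 𝒳 → ℝ) : Prop :=
  ∀ a, Summable fun c : XStar 𝒳 => ((c.1 : ℝ)) ^ 2 * Q a c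

/-! ### The mean matrix, weak irreducibility and criticality -/

/-- the mean matrix `A(a,b) = Σ_c ℚ{c|b} m(a,c)`, valued in `[0,∞]`. -/
noncomputable def AmatE [Fintype 𝒳] (Q : 𝒳 → XStar 𝒳 → ℝ) : Matrix 𝒳 𝒳 ℝ≥0∞ :=
  Matrix.of fun a b => ∑' c : XStar 𝒳, (mult a c : ℝ≥0∞) * ENNReal.ofReal (Q b c)

/-- `A*(a,b) = Σ_{k ≥ 1} A^k(a,b) ∈ [0,∞]`. -/
noncomputable def Astar [Fintype 𝒳] [DecidableEq 𝒳] (Q : 𝒳 → XStar 𝒳 → ℝ) (a b : 𝒳) : ℝ≥0∞ :=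
  ∑' k : ℕ, (AmatE Q ^ (k + 1)) a b

/-- the multitype Galton-Watson tree with offspring kernel `Q` is weakly irreducible:
`𝒳` splits into recurrent and transient states as prescribed, and the number of
transient offspring is uniformly bounded under `Q`. -/
def WeaklyIrreducibleGW [Fintype 𝒳] [DecidableEq 𝒳] (Q : 𝒳 → XStar 𝒳 → ℝ) : Prop :=
  ∃ Xr Xt : Set 𝒳, Xr.Nonempty ∧ Disjoint Xr Xt ∧ Xr ∪ Xt = Set.univ ∧
    (∀ a b, b ∈ Xr → 0 < Astar Q a b) ∧
    (∀ a b, b ∈ Xt → (a = b ∨ a ∈ Xr) → Astar Q a b = 0) ∧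
    ∃ C : ℕ, ∀ a c, Q a c ≠ 0 → (∑ b : 𝒳, if b ∈ Xt then mult b c else 0) ≤ C

/-- the mean matrix as a real matrix (meaningful when the entries are finite). -/
noncomputable def Amat [Fintype 𝒳] (Q : 𝒳 → XStar 𝒳 → ℝ) : Matrix 𝒳 𝒳 ℝ :=
  Matrix.of fun a b => ∑' c : XStar 𝒳, (mult a c : ℝ) * Q b c

/-- `r` is the Perron-Frobenius eigenvalue of the nonnegative matrix `M` : it is an
eigenvalue with a nonnegative eigenvector dominating the modulus of every eigenvalue. -/
def IsPerronRoot [Fintype 𝒳] [DecidableEq 𝒳] (M : Matrix 𝒳 𝒳 ℝ) (r : ℝ) : Prop :=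
  (∃ v : 𝒳 → ℝ, v ≠ 0 ∧ (∀ a, 0 ≤ v a) ∧ M.mulVec v = r • v) ∧
  ∀ z : ℂ, (M.map (algebraMap ℝ ℂ)).charpoly.IsRoot z → ‖z‖ ≤ r

/-- criticality: the Perron-Frobenius eigenvalue of the mean matrix is `1`. -/
def CriticalGW [Fintype 𝒳] [DecidableEq 𝒳] (Q : 𝒳 → XStar 𝒳 → ℝ) : Prop :=
  IsPerronRoot (Amat Q) 1

/-! ### Spaces of measures (weak topology = topology of pointwise convergence) -/

/-- `ℳ̃(𝒳×𝒳)`: finite (nonnegative) measures on `𝒳 × 𝒳`. -/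
def Mpair (𝒳 : Type) : Set ((𝒳 × 𝒳) → ℝ) := {ϖ | ∀ p, 0 ≤ ϖ p}

/-- `ℳ(𝒳×𝒳*)`: probability measures `ν` on `𝒳 × 𝒳*` with `∫ n dν < ∞`. -/
def Mstar (𝒳 : Type) : Set ((𝒳 × XStar 𝒳) → ℝ) :=
  {ν | (∀ p, 0 ≤ ν p) ∧ HasSum ν 1 ∧ Summable fun p : 𝒳 × XStar 𝒳 => (p.2.1 : ℝ) * ν p}

/-- `ℳ(𝒳×𝒳_k*)`: probability measures on `𝒳 × 𝒳*` carried by `𝒳 × 𝒳_k*`. -/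
def MstarK (𝒳 : Type) (k : ℕ) : Set ((𝒳 × XStar 𝒳) → ℝ) :=
  {ν | ν ∈ Mstar 𝒳 ∧ ∀ p : 𝒳 × XStar 𝒳, k < p.2.1 → ν p = 0}

/-- `ℳ(𝒳×𝒳)` as probability measures: the empirical pair measure lives here. -/
def Mprob2 (𝒳 : Type) [Fintype 𝒳] : Set ((𝒳 × 𝒳) → ℝ) :=
  {μ | (∀ p, 0 ≤ μ p) ∧ ∑ p : 𝒳 × 𝒳, μ p = 1}

/-- the `𝒳`-marginal `ν₁` of a measure on `𝒳 × 𝒳*`. -/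
noncomputable def nu1 (ν : (𝒳 × XStar 𝒳) → ℝ) : 𝒳 → ℝ := fun a => ∑' c : XStar 𝒳, ν (a, c)

/-- the second marginal `ϖ₂` of a measure on `𝒳 × 𝒳`. -/
noncomputable def pi2 [Fintype 𝒳] (ϖ : (𝒳 × 𝒳) → ℝ) : 𝒳 → ℝ := fun b => ∑ a : 𝒳, ϖ (a, b)

/-- `(ϖ, ν)` is sub-consistent: `ϖ(a,b) ≥ Σ_c m(b,c) ν(a,c)` for all `a, b`. -/
def SubConsistent (ϖ : (𝒳 × 𝒳) → ℝ) (ν : (𝒳 × XStar 𝒳) → ℝ) : Prop :=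
  ∀ a b : 𝒳, (∑' c : XStar 𝒳, (mult b c : ℝ) * ν (a, c)) ≤ ϖ (a, b)

/-- `(ϖ, ν)` is consistent: `ϖ(a,b) = Σ_c m(b,c) ν(a,c)` for all `a, b`. -/
def Consistent (ϖ : (𝒳 × 𝒳) → ℝ) (ν : (𝒳 × XStar 𝒳) → ℝ) : Prop :=
  ∀ a b : 𝒳, (∑' c : XStar 𝒳, (mult b c : ℝ) * ν (a, c)) = ϖ (a, b)

/-- the measure `ν₁ ⊗ ℚ (a,c) = ν₁(a) ℚ{c|a}` on `𝒳 × 𝒳*`. -/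
noncomputable def prodQ (ν1f : 𝒳 → ℝ) (Q : 𝒳 → XStar 𝒳 → ℝ) : (𝒳 × XStar 𝒳) → ℝ :=
  fun p => ν1f p.1 * Q p.1 p.2

/-! ### The rate functions -/

/-- the rate function `J` of Theorem 2.1. -/
noncomputable def Jrate [Fintype 𝒳] (Q : 𝒳 → XStar 𝒳 → ℝ)
    (ϖ : (𝒳 × 𝒳) → ℝ) (ν : (𝒳 × XStar 𝒳) → ℝ) : ℝ≥0∞ :=
  if SubConsistent ϖ ν ∧ pi2 ϖ = nu1 ν then relEnt ν (prodQ (nu1 ν) Q) else ⊤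

/-- the rate function `J_k` of Theorem 2.3 (consistency instead of sub-consistency). -/
noncomputable def JrateC [Fintype 𝒳] (Q : 𝒳 → XStar 𝒳 → ℝ)
    (ϖ : (𝒳 × 𝒳) → ℝ) (ν : (𝒳 × XStar 𝒳) → ℝ) : ℝ≥0∞ :=
  if Consistent ϖ ν ∧ pi2 ϖ = nu1 ν then relEnt ν (prodQ (nu1 ν) Q) else ⊤

/-- the rate function `K` of Corollary 2.2. -/
noncomputable def Krate (Q : 𝒳 → XStar 𝒳 → ℝ) (ν : (𝒳 × XStar 𝒳) → ℝ) : ℝ≥0∞ :=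
  if ∀ b : 𝒳, (∑' p : 𝒳 × XStar 𝒳, (mult b p.2 : ℝ) * ν p) ≤ nu1 ν b then
    relEnt ν (prodQ (nu1 ν) Q)
  else ⊤

/-- the rate function `J̃`, defined on sub-consistent pairs. -/
noncomputable def Jtilde [Fintype 𝒳] (Q : 𝒳 → XStar 𝒳 → ℝ)
    (ϖ : (𝒳 × 𝒳) → ℝ) (ν : (𝒳 × XStar 𝒳) → ℝ) : ℝ≥0∞ :=
  if pi2 ϖ = nu1 ν then relEnt ν (prodQ (nu1 ν) Q) else ⊤

/-! ### Events -/

/-- the event `{(L̃_X, M_X) ∈ F}` for `F` a set of pairs of measures. -/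
def evPairOff (F : Set (↥(Mpair 𝒳) × ↥(Mstar 𝒳))) : Set (TypedTree 𝒳) :=
  {t | ∃ x ∈ F, x.1.1 = LtX t ∧ x.2.1 = MX t}

/-- the event `{(L̃_X, M_X) ∈ F}` for `F` a set of pairs with second component in `ℳ(𝒳×𝒳_k*)`. -/
def evPairOffK (k : ℕ) (F : Set (↥(Mpair 𝒳) × ↥(MstarK 𝒳 k))) : Set (TypedTree 𝒳) :=
  {t | ∃ x ∈ F, x.1.1 = LtX t ∧ x.2.1 = MX t}

/-- the event `{M_X ∈ F}`. -/
def evOff (F : Set ↥(Mstar 𝒳)) : Set (TypedTree 𝒳) := {t | ∃ x ∈ F, x.1 = MX t}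

/-- the event `{L_X ∈ F}`. -/
def evPair [Fintype 𝒳] (F : Set ↥(Mprob2 𝒳)) : Set (TypedTree 𝒳) := {t | ∃ x ∈ F, x.1 = LX t}

/-- `ℳ_s`, the (closed) set of sub-consistent pairs, as a subspace. -/
def Msub (𝒳 : Type) : Set (↥(Mpair 𝒳) × ↥(Mstar 𝒳)) := {x | SubConsistent x.1.1 x.2.1}

/-- `ℳ_{c,k}`, the (closed) set of consistent pairs, as a subspace. -/
def MsubK (𝒳 : Type) (k : ℕ) : Set (↥(Mpair 𝒳) × ↥(MstarK 𝒳 k)) := {x | Consistent x.1.1 x.2.1}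

/-- the event `{(L̃_X, M_X) ∈ F}` for `F ⊆ ℳ_s`. -/
def evPairOffSub (F : Set ↥(Msub 𝒳)) : Set (TypedTree 𝒳) :=
  {t | ∃ x ∈ F, x.1.1.1 = LtX t ∧ x.1.2.1 = MX t}

/-- the event `{(L̃_X, M_X) ∈ F}` for `F ⊆ ℳ_{c,k}`. -/
def evPairOffSubK (k : ℕ) (F : Set ↥(MsubK 𝒳 k)) : Set (TypedTree 𝒳) :=
  {t | ∃ x ∈ F, x.1.1.1 = LtX t ∧ x.1.2.1 = MX t}

/-! ### Markov chains indexed by Galton-Watson trees -/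

/-- the offspring kernel of a Markov chain with transition kernel `Q` indexed by a
Galton-Watson tree with offspring law `p`: `ℚ{c|b} = p(n) ∏ᵢ Q{aᵢ|b}`. -/
noncomputable def mcKernel (p : ℕ → ℝ) (Q : 𝒳 → 𝒳 → ℝ) : 𝒳 → XStar 𝒳 → ℝ :=
  fun b c => p c.1 * ∏ i : Fin c.1, Q b (c.2 i)

/-- irreducibility of a Markovian transition kernel on `𝒳`. -/
def IrreducibleKernel [Fintype 𝒳] [DecidableEq 𝒳] (Q : 𝒳 → 𝒳 → ℝ) : Prop :=
  ∀ a b : 𝒳, ∃ n : ℕ, 0 < ((Matrix.of Q) ^ (n + 1)) a b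

/-- first marginal of a measure on `𝒳 × 𝒳`. -/
noncomputable def mu1m [Fintype 𝒳] (μ : (𝒳 × 𝒳) → ℝ) : 𝒳 → ℝ := fun a => ∑ b : 𝒳, μ (a, b)

/-- second marginal of a measure on `𝒳 × 𝒳`. -/
noncomputable def mu2m [Fintype 𝒳] (μ : (𝒳 × 𝒳) → ℝ) : 𝒳 → ℝ := fun b => ∑ a : 𝒳, μ (a, b)

/-- the Cramér transform `I_p(x) = sup_λ {λx - log Σₙ p(n) e^{λn}}` of an offspring law,
as an element of `[0,∞]` (the log-moment generating function being `+∞`,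
i.e. the bracket being `-∞`, where the series diverges). -/
noncomputable def Ip (p : ℕ → ℝ) (x : ℝ) : ℝ≥0∞ :=
  ⨆ lam : ℝ,
    if Summable (fun n : ℕ => p n * Real.exp (lam * n)) then
      ENNReal.ofReal (lam * x - Real.log (∑' n : ℕ, p n * Real.exp (lam * n)))
    else 0

/-- the log-moment generating function `Λ_p(λ)`, valued in `(-∞, ∞]`. -/
noncomputable def logMgf (p : ℕ → ℝ) (lam : ℝ) : EReal :=
  if Summable (fun n : ℕ => p n * Real.exp (lam * n)) then
    ((Real.log (∑' n : ℕ, p n * Real.exp (lam * n)) : ℝ) : EReal)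
  else ⊤

/-- the rate function `I` of Theorem 2.5. -/
noncomputable def Irate [Fintype 𝒳] (p : ℕ → ℝ) (Q : 𝒳 → 𝒳 → ℝ) (μ : (𝒳 × 𝒳) → ℝ) : ℝ≥0∞ :=
  if ∀ a : 𝒳, mu2m μ a = 0 → mu1m μ a = 0 then
    relEnt μ (fun q : 𝒳 × 𝒳 => mu1m μ q.1 * Q q.1 q.2)
      + ∑ a : 𝒳, ENNReal.ofReal (mu2m μ a) * Ip p (mu1m μ a / mu2m μ a)
  else ⊤

/-! ### The variational upper-bound functional `Ĵ` -/

/-- bounded functions on `𝒳 × 𝒳*`. -/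
def BddFun {α : Type*} (g : α → ℝ) : Prop := ∃ M : ℝ, ∀ x, |g x| ≤ M

/-- `U_g(a) = log Σ_c e^{g(a,c)} ℚ{c|a}`. -/
noncomputable def Ug (Q : 𝒳 → XStar 𝒳 → ℝ) (g : (𝒳 × XStar 𝒳) → ℝ) (a : 𝒳) : ℝ :=
  Real.log (∑' c : XStar 𝒳, Real.exp (g (a, c)) * Q a c)

/-- `Ĵ(ϖ,ν) = sup_{g bounded} { ∫ g dν - ∫ U_g(b) ϖ(da,db) }`. -/
noncomputable def Jhat [Fintype 𝒳] (Q : 𝒳 → XStar 𝒳 → ℝ)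
    (ϖ : (𝒳 × 𝒳) → ℝ) (ν : (𝒳 × XStar 𝒳) → ℝ) : ℝ≥0∞ :=
  ⨆ (g : (𝒳 × XStar 𝒳) → ℝ) (_ : BddFun g),
    ENNReal.ofReal ((∑' p : 𝒳 × XStar 𝒳, g p * ν p) - ∑ q : 𝒳 × 𝒳, Ug Q g q.2 * ϖ q)

/-! ### Truncation, conditional kernels, total variation -/

/-- `‖ν‖_k = ν(𝒳 × 𝒳_k*)`. -/
noncomputable def normK (k : ℕ) (ν : (𝒳 × XStar 𝒳) → ℝ) : ℝ :=
  ∑' p : 𝒳 × XStar 𝒳, if p.2.1 ≤ k then ν p else 0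

/-- `ν_k`, the normalised restriction of `ν` to `𝒳 × 𝒳_k*`. -/
noncomputable def restrictK (k : ℕ) (ν : (𝒳 × XStar 𝒳) → ℝ) : (𝒳 × XStar 𝒳) → ℝ :=
  fun p => if p.2.1 ≤ k then ν p / normK k ν else 0

/-- `ℚ{𝒳_k* | a}`. -/
noncomputable def QmassK (Q : 𝒳 → XStar 𝒳 → ℝ) (k : ℕ) (a : 𝒳) : ℝ :=
  ∑' c : XStar 𝒳, if c.1 ≤ k then Q a c else 0

/-- the conditional offspring kernel `ℚ_k{c|a} = ℚ{c|a} / ℚ{𝒳_k*|a}` on `𝒳_k*`. -/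
noncomputable def Qcond (Q : 𝒳 → XStar 𝒳 → ℝ) (k : ℕ) : 𝒳 → XStar 𝒳 → ℝ :=
  fun a c => if c.1 ≤ k then Q a c / QmassK Q k a else 0

/-- `ϖ_k(a,b) = Σ_{c ∈ 𝒳_k*} m(b,c) ν_k(a,c)`. -/
noncomputable def piK (k : ℕ) (ν : (𝒳 × XStar 𝒳) → ℝ) : (𝒳 × 𝒳) → ℝ :=
  fun q => ∑' c : XStar 𝒳, (mult q.2 c : ℝ) * restrictK k ν (q.1, c)

/-- the total variation metric `d(ν,ν̃) = (1/2) Σ |ν - ν̃|`. -/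
noncomputable def tvDist {α : Type*} (ν ν' : α → ℝ) : ℝ := (1 / 2) * ∑' x, |ν x - ν' x|

/-- the pairing `⟨f, ν⟩ = Σ f dν`, valued in `[-∞,∞]`
(defined as the difference of the positive and negative parts). -/
noncomputable def pairE {α : Type*} (f ν : α → ℝ) : EReal :=
  ((∑' x, ENNReal.ofReal (f x * ν x) : ℝ≥0∞) : EReal)
    - ((∑' x, ENNReal.ofReal (-(f x * ν x)) : ℝ≥0∞) : EReal)

/-- `f^{(0,q]} = 1_{ν₁⊗ℚ ≥ ν > 0} log (ν / ν₁⊗ℚ)`. -/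
noncomputable def f0q (Q : 𝒳 → XStar 𝒳 → ℝ) (ν : (𝒳 × XStar 𝒳) → ℝ) : (𝒳 × XStar 𝒳) → ℝ :=
  fun p => if 0 < ν p ∧ ν p ≤ prodQ (nu1 ν) Q p then Real.log (ν p / prodQ (nu1 ν) Q p) else 0

/-- `f^{(q,1]} = 1_{1 ≥ ν > ν₁⊗ℚ} log (ν / ν₁⊗ℚ)`. -/
noncomputable def fq1 (Q : 𝒳 → XStar 𝒳 → ℝ) (ν : (𝒳 × XStar 𝒳) → ℝ) : (𝒳 × XStar 𝒳) → ℝ :=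
  fun p => if prodQ (nu1 ν) Q p < ν p ∧ ν p ≤ 1 then Real.log (ν p / prodQ (nu1 ν) Q p) else 0

/-- `f_k = 1_{ν_k > 0} log (ν_k / (ν_k)₁⊗ℚ_k)`. -/
noncomputable def fres (Q : 𝒳 → XStar 𝒳 → ℝ) (k : ℕ) (ν : (𝒳 × XStar 𝒳) → ℝ) :
    (𝒳 × XStar 𝒳) → ℝ :=
  fun p => if 0 < restrictK k ν p then
    Real.log (restrictK k ν p / prodQ (nu1 (restrictK k ν)) (Qcond Q k) p) else 0

/-! ### Product laws on `𝒳*` and on `𝒳ⁿ` -/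

/-- the offspring law `q(c) = p(n) ∏ᵢ q̂(aᵢ)` on `𝒳*`. -/
noncomputable def qProd (p : ℕ → ℝ) (qhat : 𝒳 → ℝ) : XStar 𝒳 → ℝ :=
  fun c => p c.1 * ∏ i : Fin c.1, qhat (c.2 i)

/-- the product measure `q̂ⁿ` on `𝒳ⁿ`. -/
noncomputable def prodM (qhat : 𝒳 → ℝ) (n : ℕ) : (Fin n → 𝒳) → ℝ := fun y => ∏ i, qhat (y i)

/-- the `i`-th marginal `v_{n,i}` of a measure on `𝒳ⁿ`. -/
noncomputable def marginal [Fintype 𝒳] {n : ℕ} (v : (Fin n → 𝒳) → ℝ) (i : Fin n) : 𝒳 → ℝ :=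
  fun b => ∑ y : Fin n → 𝒳, if y i = b then v y else 0

/-- the tilted law `s_λ(n) = p(n) e^{λn - Λ_p(λ)}`. -/
noncomputable def tilted (p : ℕ → ℝ) (lam : ℝ) : ℕ → ℝ :=
  fun n => p n * Real.exp (lam * n - Real.log (∑' m : ℕ, p m * Real.exp (lam * m)))

/-- `n × M_X[N > B]`: the number of vertices with more than `B` children. -/
noncomputable def bigCount (t : TypedTree 𝒳) (B : ℕ) : ℝ :=
  ∑' p : 𝒳 × XStar 𝒳, if B < p.2.1 then (TypedTree.offCount t p : ℝ) else 0



noncomputable def phi (x y : ℝ) : ℝ := x * Real.log (x / y) - x + y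

lemma key {x y : ℝ} (hx : 0 ≤ x) (hy : 0 ≤ y) (h : y = 0 → x = 0) :
    x - y ≤ x * Real.log (x / y) := by
  rcases eq_or_lt_of_le hx with h0 | hx0
  · simp [← h0]; linarith
  · have hy0 : 0 < y := by
      rcases eq_or_lt_of_le hy with e | e
      · exact absurd (h e.symm) (by linarith)
      · exact e
    have hl := Real.log_le_sub_one_of_pos (show (0:ℝ) < y / x from div_pos hy0 hx0)
    have hlog : Real.log (x / y) = - Real.log (y / x) := by
      rw [← Real.log_inv, inv_div]
    have hxy : x * (y / x) = y := by field_simp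
    nlinarith [mul_le_mul_of_nonneg_left hl hx]

lemma phi_nonneg {x y : ℝ} (hx : 0 ≤ x) (hy : 0 ≤ y) (h : y = 0 → x = 0) :
    0 ≤ phi x y := by
  have := key hx hy h; unfold phi; linarith

lemma key2 {x y Sx Sy : ℝ} (hx : 0 ≤ x) (hy : 0 ≤ y) (h : y = 0 → x = 0)
    (hSx : 0 < Sx) (hSy : 0 < Sy) :
    x * Real.log (Sx / Sy) + x - y * (Sx / Sy) ≤ x * Real.log (x / y) := by
  rcases eq_or_lt_of_le hx with h0 | hx0
  · simp [← h0]
    positivity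
  · have hy0 : 0 < y := by
      rcases eq_or_lt_of_le hy with e | e
      · exact absurd (h e.symm) (by linarith)
      · exact e
    have hy' : 0 < y * (Sx / Sy) := by positivity
    have k := key hx hy'.le (fun e => absurd e hy'.ne')
    have harg : x / (y * (Sx / Sy)) = (x / y) / (Sx / Sy) := by
      field_simp
    rw [harg, Real.log_div (by positivity) (by positivity)] at k
    nlinarith

lemma phi_zero_zero : phi 0 0 = 0 := by simp [phi]

lemma phi_smul {z : ℝ} (hz : 0 < z) (x y : ℝ) : z * phi x y = phi (z*x) (z*y) := by
  unfold phi
  rw [mul_div_mul_left x y hz.ne']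
  ring

lemma phi_add_le {x y X Y : ℝ} (hx : 0 ≤ x) (hy : 0 ≤ y) (hX : 0 ≤ X) (hY : 0 ≤ Y)
    (h1 : y = 0 → x = 0) (h2 : Y = 0 → X = 0) :
    phi (x + X) (y + Y) ≤ phi x y + phi X Y := by
  rcases eq_or_lt_of_le (by linarith : (0:ℝ) ≤ y + Y) with hSy | hSy
  · have hy0 : y = 0 := by linarith
    have hY0 : Y = 0 := by linarith
    have hx0 := h1 hy0; have hX0 := h2 hY0
    simp [hx0, hX0, hy0, hY0, phi_zero_zero]
  · rcases eq_or_lt_of_le (by linarith : (0:ℝ) ≤ x + X) with hSx | hSx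
    · have hx0 : x = 0 := by linarith
      have hX0 : X = 0 := by linarith
      simp [hx0, hX0, phi]
    · have k1 := key2 hx hy h1 hSx hSy
      have k2 := key2 hX hY h2 hSx hSy
      have hc : (y + Y) * ((x + X) / (y + Y)) = x + X := by field_simp
      have hd : (x + X) * Real.log ((x + X) / (y + Y))
          = x * Real.log ((x + X) / (y + Y)) + X * Real.log ((x + X) / (y + Y)) := by ring
      unfold phi
      rw [hd]
      nlinarith [k1, k2]

lemma phi_sum_le {ι : Type*} (a c : ι → ℝ) (ha : ∀ i, 0 ≤ a i) (hc : ∀ i, 0 ≤ c i)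
    (hac : ∀ i, c i = 0 → a i = 0) (t : Finset ι) :
    phi (∑ i ∈ t, a i) (∑ i ∈ t, c i) ≤ ∑ i ∈ t, phi (a i) (c i) := by
  classical
  induction t using Finset.induction with
  | empty => simp [phi_zero_zero]
  | insert j t' hnot ih =>
    rw [Finset.sum_insert hnot, Finset.sum_insert hnot, Finset.sum_insert hnot]
    refine le_trans (phi_add_le (ha j) (hc j) ?_ ?_ (hac j) ?_) (by linarith)
    · exact Finset.sum_nonneg fun i _ => ha i
    · exact Finset.sum_nonneg fun i _ => hc i
    · intro h0
      have : ∀ i ∈ t', c i = 0 := (Finset.sum_eq_zero_iff_of_nonneg fun i _ => hc i).1 h0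
      exact Finset.sum_eq_zero fun i hi => hac i (this i hi)

open Filter in
lemma phi_continuousAt {A C : ℝ} (hC : 0 < C) :
    ContinuousAt (fun p : ℝ × ℝ => phi p.1 p.2) (A, C) := by
  have hg : ContinuousAt
      (fun p : ℝ × ℝ => p.2 * ((p.1 / p.2) * Real.log (p.1 / p.2)) - p.1 + p.2) (A, C) := by
    have hdiv : ContinuousAt (fun p : ℝ × ℝ => p.1 / p.2) (A, C) :=
      (continuousAt_fst).div continuousAt_snd hC.ne'
    exact ((continuousAt_snd.mul (Real.continuous_mul_log.continuousAt.comp hdiv)).sub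
      continuousAt_fst).add continuousAt_snd
  refine hg.congr ?_
  have hopen : IsOpen {p : ℝ × ℝ | 0 < p.2} := isOpen_lt continuous_const continuous_snd
  filter_upwards [hopen.mem_nhds (by exact hC : (A, C) ∈ {p : ℝ × ℝ | 0 < p.2})] with p hp
  have : p.2 * (p.1 / p.2) = p.1 := by field_simp
  simp only [phi]
  rw [← mul_assoc, this]

open Filter in
lemma logSum {ι : Type*} (a c : ι → ℝ) (ha : ∀ i, 0 ≤ a i) (hc : ∀ i, 0 ≤ c i)
    (hac : ∀ i, c i = 0 → a i = 0) {A C : ℝ} (hA : HasSum a A) (hC : HasSum c C) :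
    ENNReal.ofReal (phi A C) ≤ ∑' i, ENNReal.ofReal (phi (a i) (c i)) := by
  classical
  rcases eq_or_lt_of_le (hC.nonneg hc) with hC0 | hC0
  · have hc0 : ∀ i, c i = 0 := fun i =>
      le_antisymm (by simpa [← hC0] using le_hasSum hC i fun j _ => hc j) (hc i)
    have ha0 : ∀ i, a i = 0 := fun i => hac i (hc0 i)
    have : A = 0 := by
      have : HasSum a 0 := by
        simpa [funext ha0] using hasSum_zero
      exact hA.unique this
    simp [this, ← hC0, phi_zero_zero]
  · have h1 : Tendsto (fun t : Finset ι => ((∑ i ∈ t, a i), (∑ i ∈ t, c i)))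
        atTop (nhds (A, C)) := hA.prodMk_nhds hC
    have h3 : Tendsto (fun t : Finset ι => ENNReal.ofReal (phi (∑ i ∈ t, a i) (∑ i ∈ t, c i)))
        atTop (nhds (ENNReal.ofReal (phi A C))) :=
      (ENNReal.continuous_ofReal.tendsto _).comp ((phi_continuousAt hC0).tendsto.comp h1)
    refine le_of_tendsto h3 (Eventually.of_forall fun t => ?_)
    calc ENNReal.ofReal (phi (∑ i ∈ t, a i) (∑ i ∈ t, c i))
        ≤ ENNReal.ofReal (∑ i ∈ t, phi (a i) (c i)) :=
          ENNReal.ofReal_le_ofReal (phi_sum_le a c ha hc hac t)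
      _ = ∑ i ∈ t, ENNReal.ofReal (phi (a i) (c i)) :=
          ENNReal.ofReal_sum_of_nonneg fun i _ => phi_nonneg (ha i) (hc i) (hac i)
      _ ≤ ∑' i, ENNReal.ofReal (phi (a i) (c i)) := ENNReal.sum_le_tsum t


section Helpers

lemma relEnt_eq_top_of {α : Type*} (ν μ : α → ℝ) (h : ¬ ∀ x, μ x = 0 → ν x = 0) :
    relEnt ν μ = ⊤ := if_neg h

lemma relEnt_fintype {α : Type*} [Fintype α] (ν μ : α → ℝ)
    (hν : ∀ x, 0 ≤ ν x) (hμ : ∀ x, 0 ≤ μ x) (ac : ∀ x, μ x = 0 → ν x = 0) :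
    relEnt ν μ = ENNReal.ofReal (∑ x, phi (ν x) (μ x)) := by
  rw [relEnt, if_pos ac, tsum_fintype,
    ENNReal.ofReal_sum_of_nonneg fun x _ => phi_nonneg (hν x) (hμ x) (ac x)]
  rfl

variable {𝒳 : Type} [Fintype 𝒳]

lemma marginal_nonneg {n : ℕ} (v : (Fin n → 𝒳) → ℝ) (hv0 : ∀ y, 0 ≤ v y) (i : Fin n) (b : 𝒳) :
    0 ≤ marginal v i b :=
  Finset.sum_nonneg fun y _ => by split <;> simp [hv0 y]

lemma marginal_sum {n : ℕ} (v : (Fin n → 𝒳) → ℝ) (i : Fin n) :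
    ∑ b, marginal v i b = ∑ y, v y := by
  unfold marginal
  rw [Finset.sum_comm]
  refine Finset.sum_congr rfl fun y _ => ?_
  simp

lemma le_marginal {n : ℕ} (v : (Fin n → 𝒳) → ℝ) (hv0 : ∀ y, 0 ≤ v y) (i : Fin n)
    (y : Fin n → 𝒳) : v y ≤ marginal v i (y i) := by
  unfold marginal
  have := Finset.single_le_sum (f := fun y' : Fin n → 𝒳 => if y' i = y i then v y' else 0)
    (fun y' _ => by split <;> simp [hv0 y']) (Finset.mem_univ y)
  simpa using this

lemma group_sum {n : ℕ} (v : (Fin n → 𝒳) → ℝ) (i : Fin n) (f : 𝒳 → ℝ) :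
    ∑ y, v y * f (y i) = ∑ b, marginal v i b * f b := by
  unfold marginal
  simp only [Finset.sum_mul, ite_mul, zero_mul]
  rw [Finset.sum_comm]
  refine Finset.sum_congr rfl fun y _ => ?_
  simp

lemma sum_prod_swap {n : ℕ} (g : Fin n → 𝒳 → ℝ) :
    ∑ y : Fin n → 𝒳, ∏ i, g i (y i) = ∏ i, ∑ b, g i b :=
  (Fintype.prod_sum g).symm

end Helpers


section PerN
variable {𝒳 : Type} [Fintype 𝒳]

lemma marginal_prod {n : ℕ} (w : 𝒳 → ℝ) (hw1 : ∑ b, w b = 1) (i : Fin n) :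
    marginal (fun y : Fin n → 𝒳 => ∏ j, w (y j)) i = w := by
  funext b
  unfold marginal
  have hsplit : ∀ y : Fin n → 𝒳, (if y i = b then ∏ j, w (y j) else 0)
      = ∏ j, (if j = i then (if y j = b then w (y j) else 0) else w (y j)) := by
    intro y
    by_cases h : y i = b
    · simp only [if_pos h]
      refine Finset.prod_congr rfl fun j _ => ?_
      by_cases hj : j = i
      · subst hj; simp [h]
      · simp [hj]
    · rw [if_neg h]
      exact (Finset.prod_eq_zero (Finset.mem_univ i) (by simp [h])).symm
  rw [Finset.sum_congr rfl fun y _ => hsplit y,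
    sum_prod_swap (fun j x => if j = i then (if x = b then w x else 0) else w x)]
  have hj : ∀ j : Fin n, (∑ x, if j = i then (if x = b then w x else 0) else w x)
      = if j = i then w b else 1 := by
    intro j; by_cases hji : j = i <;> simp [hji, hw1]
  rw [Finset.prod_congr rfl fun j _ => hj j]
  simp

variable {n : ℕ} (q : 𝒳 → ℝ) (v : (Fin n → 𝒳) → ℝ)

lemma stepA (hv0 : ∀ y, 0 ≤ v y) (hq0 : ∀ b, 0 ≤ q b)
    (ac : ∀ y, (∏ j, q (y j)) = 0 → v y = 0) :
    ∑ y, v y * Real.log ((∏ j, marginal v j (y j)) / ∏ j, q (y j))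
      = ∑ i : Fin n, ∑ b, marginal v i b * Real.log (marginal v i b / q b) := by
  have h1 : ∀ y : Fin n → 𝒳, v y * Real.log ((∏ j, marginal v j (y j)) / ∏ j, q (y j))
      = ∑ i, v y * Real.log (marginal v i (y i) / q (y i)) := by
    intro y
    rcases eq_or_lt_of_le (hv0 y) with h0 | h0
    · simp [← h0]
    · have hP : (0:ℝ) < ∏ j, q (y j) :=
        lt_of_le_of_ne (Finset.prod_nonneg fun j _ => hq0 (y j))
          (fun e => h0.ne' (ac y e.symm))
      have hqj : ∀ j, q (y j) ≠ 0 := fun j e =>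
        hP.ne' (Finset.prod_eq_zero (Finset.mem_univ j) e)
      have hmpos : ∀ j, (0:ℝ) < marginal v j (y j) := fun j =>
        lt_of_lt_of_le h0 (le_marginal v hv0 j y)
      have hW : (0:ℝ) < ∏ j, marginal v j (y j) :=
        Finset.prod_pos fun j _ => hmpos j
      have hld : ∀ i : Fin n, Real.log (marginal v i (y i) / q (y i))
          = Real.log (marginal v i (y i)) - Real.log (q (y i)) :=
        fun i => Real.log_div (hmpos i).ne' (hqj i)
      rw [Real.log_div hW.ne' hP.ne',
        Real.log_prod (fun j _ => (hmpos j).ne'),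
        Real.log_prod (fun j _ => hqj j)]
      simp only [hld, mul_sub, Finset.mul_sum, Finset.sum_sub_distrib]
  rw [Finset.sum_congr rfl (fun y _ => h1 y), Finset.sum_comm]
  exact Finset.sum_congr rfl fun i _ =>
    group_sum v i (fun b => Real.log (marginal v i b / q b))

lemma stepB (hv0 : ∀ y, 0 ≤ v y) (hv1 : ∑ y, v y = 1) (hq0 : ∀ b, 0 ≤ q b)
    (ac : ∀ y, (∏ j, q (y j)) = 0 → v y = 0) :
    ∑ y, v y * Real.log ((∏ j, marginal v j (y j)) / ∏ j, q (y j))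
      ≤ ∑ y, v y * Real.log (v y / ∏ j, q (y j)) := by
  have hW1 : ∑ y : Fin n → 𝒳, ∏ j, marginal v j (y j) = 1 := by
    rw [sum_prod_swap (fun j x => marginal v j x)]
    rw [Finset.prod_congr rfl fun j _ => (marginal_sum v j).trans hv1]
    simp
  have hpt : ∀ y : Fin n → 𝒳,
      v y * Real.log ((∏ j, marginal v j (y j)) / ∏ j, q (y j))
        + (v y - ∏ j, marginal v j (y j)) ≤ v y * Real.log (v y / ∏ j, q (y j)) := by
    intro y
    rcases eq_or_lt_of_le (hv0 y) with h0 | h0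
    · have hWnn : (0:ℝ) ≤ ∏ j, marginal v j (y j) :=
        Finset.prod_nonneg fun j _ => marginal_nonneg v hv0 j (y j)
      simp [← h0]; linarith
    · have hP : (0:ℝ) < ∏ j, q (y j) :=
        lt_of_le_of_ne (Finset.prod_nonneg fun j _ => hq0 (y j))
          (fun e => h0.ne' (ac y e.symm))
      have hW : (0:ℝ) < ∏ j, marginal v j (y j) :=
        Finset.prod_pos fun j _ => lt_of_lt_of_le h0 (le_marginal v hv0 j y)
      have hk := key (x := v y) (y := ∏ j, marginal v j (y j)) h0.le hW.le
        (fun e => absurd e hW.ne')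
      rw [Real.log_div h0.ne' hW.ne'] at hk
      rw [Real.log_div h0.ne' hP.ne', Real.log_div hW.ne' hP.ne']
      nlinarith
  have := Finset.sum_le_sum fun y (_ : y ∈ Finset.univ) => hpt y
  rw [Finset.sum_add_distrib, Finset.sum_sub_distrib, hv1, hW1] at this
  linarith

end PerN


section PerN2
variable {𝒳 : Type} [Fintype 𝒳]

lemma phi_marg_sum_eq {n : ℕ} (q : 𝒳 → ℝ) (v : (Fin n → 𝒳) → ℝ)
    (hv1 : ∑ y, v y = 1) (hq1 : ∑ b, q b = 1) (i : Fin n) :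
    ∑ b, phi (marginal v i b) (q b)
      = ∑ b, marginal v i b * Real.log (marginal v i b / q b) := by
  simp only [phi, Finset.sum_add_distrib, Finset.sum_sub_distrib, marginal_sum v i, hv1, hq1]
  ring

lemma phi_v_sum_eq {n : ℕ} (q : 𝒳 → ℝ) (v : (Fin n → 𝒳) → ℝ)
    (hv1 : ∑ y, v y = 1) (hq1 : ∑ b, q b = 1) :
    ∑ y, phi (v y) (prodM q n y) = ∑ y, v y * Real.log (v y / ∏ j, q (y j)) := by
  have hP1 : ∑ y : Fin n → 𝒳, ∏ j, q (y j) = 1 := by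
    rw [sum_prod_swap (fun _ x => q x)]; simp [hq1]
  simp only [phi, prodM, Finset.sum_add_distrib, Finset.sum_sub_distrib, hv1, hP1]
  ring

lemma relEnt_marginals_le {n : ℕ} (q : 𝒳 → ℝ) (v : (Fin n → 𝒳) → ℝ)
    (hv0 : ∀ y, 0 ≤ v y) (hv1 : ∑ y, v y = 1)
    (hq0 : ∀ b, 0 ≤ q b) (hq1 : ∑ b, q b = 1) :
    ∑ i : Fin n, relEnt (marginal v i) q ≤ relEnt v (prodM q n) := by
  by_cases ac : ∀ y, prodM q n y = 0 → v y = 0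
  · have ac' : ∀ y : Fin n → 𝒳, (∏ j, q (y j)) = 0 → v y = 0 := ac
    have acm : ∀ (i : Fin n) b, q b = 0 → marginal v i b = 0 := by
      intro i b hb
      refine Finset.sum_eq_zero fun y _ => ?_
      split
      case isTrue h => exact ac' y (Finset.prod_eq_zero (Finset.mem_univ i) (by rw [h, hb]))
      case isFalse h => rfl
    rw [relEnt_fintype v (prodM q n) hv0 (fun y => Finset.prod_nonneg fun j _ => hq0 (y j)) ac]
    rw [Finset.sum_congr rfl fun (i : Fin n) _ =>
      relEnt_fintype (marginal v i) q (marginal_nonneg v hv0 i) hq0 (acm i)]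
    rw [← ENNReal.ofReal_sum_of_nonneg (fun i _ => Finset.sum_nonneg fun b _ =>
      phi_nonneg (marginal_nonneg v hv0 i b) (hq0 b) (acm i b))]
    apply ENNReal.ofReal_le_ofReal
    rw [phi_v_sum_eq q v hv1 hq1,
      Finset.sum_congr rfl (fun (i : Fin n) _ => phi_marg_sum_eq q v hv1 hq1 i),
      ← stepA q v hv0 hq0 ac']
    exact stepB q v hv0 hv1 hq0 ac'
  · rw [relEnt_eq_top_of _ _ ac]; exact le_top

lemma relEnt_prod_eq {n : ℕ} (q : 𝒳 → ℝ) (v : (Fin n → 𝒳) → ℝ) (w : 𝒳 → ℝ)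
    (hw0 : ∀ b, 0 ≤ w b) (hw1 : ∑ b, w b = 1)
    (hq0 : ∀ b, 0 ≤ q b) (hq1 : ∑ b, q b = 1)
    (hveq : ∀ y : Fin n → 𝒳, v y = ∏ i, w (y i)) :
    relEnt v (prodM q n) = ∑ i : Fin n, relEnt (marginal v i) q := by
  have hvfun : v = fun y => ∏ j, w (y j) := funext hveq
  have hm : ∀ i : Fin n, marginal v i = w := fun i => by
    rw [hvfun]; exact marginal_prod w hw1 i
  have hv0 : ∀ y, 0 ≤ v y := fun y =>
    (hveq y) ▸ Finset.prod_nonneg fun j _ => hw0 (y j)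
  have hv1 : ∑ y, v y = 1 := by
    rw [hvfun, sum_prod_swap (fun _ x => w x)]; simp [hw1]
  by_cases hacw : ∀ b, q b = 0 → w b = 0
  · have ac : ∀ y : Fin n → 𝒳, prodM q n y = 0 → v y = 0 := by
      intro y hy
      obtain ⟨j, -, hj⟩ := Finset.prod_eq_zero_iff.1 hy
      rw [hveq]; exact Finset.prod_eq_zero (Finset.mem_univ j) (hacw _ hj)
    have acm : ∀ (i : Fin n) b, q b = 0 → marginal v i b = 0 := fun i b hb => by
      rw [hm i]; exact hacw b hb
    rw [relEnt_fintype v (prodM q n) hv0 (fun y => Finset.prod_nonneg fun j _ => hq0 (y j)) ac]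
    rw [Finset.sum_congr rfl fun (i : Fin n) _ =>
      relEnt_fintype (marginal v i) q (marginal_nonneg v hv0 i) hq0 (acm i)]
    rw [← ENNReal.ofReal_sum_of_nonneg (fun i _ => Finset.sum_nonneg fun b _ =>
      phi_nonneg (marginal_nonneg v hv0 i b) (hq0 b) (acm i b))]
    congr 1
    rw [phi_v_sum_eq q v hv1 hq1,
      Finset.sum_congr rfl (fun (i : Fin n) _ => phi_marg_sum_eq q v hv1 hq1 i),
      ← stepA q v hv0 hq0 ac]
    refine Finset.sum_congr rfl fun y _ => ?_
    have hWv : (∏ j, marginal v j (y j)) = v y := by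
      rw [hveq y]; exact Finset.prod_congr rfl fun j _ => by rw [hm j]
    rw [hWv]
  · push_neg at hacw
    obtain ⟨b0, hqb0, hwb0⟩ := hacw
    rcases n with _ | m
    · have ac0 : ∀ y : Fin 0 → 𝒳, prodM q 0 y = 0 → v y = 0 := by
        intro y hy; simp [prodM] at hy
      rw [relEnt_fintype v (prodM q 0) hv0 (fun y => by simp [prodM]) ac0]
      have : ∀ y : Fin 0 → 𝒳, phi (v y) (prodM q 0 y) = 0 := by
        intro y
        have h1 : v y = 1 := by rw [hveq]; simp
        have h2 : prodM q 0 y = 1 := by simp [prodM]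
        simp [h1, h2, phi]
      rw [Finset.sum_congr rfl fun y _ => this y]
      simp
    · have hne : ¬ ∀ y : Fin (m+1) → 𝒳, prodM q (m+1) y = 0 → v y = 0 := by
        intro hall
        have h1 : prodM q (m+1) (fun _ => b0) = 0 := by simp [prodM, hqb0]
        have h2 := hall _ h1
        rw [hveq] at h2
        simp only [Finset.prod_const, Finset.card_univ, Fintype.card_fin] at h2
        exact hwb0 (pow_eq_zero_iff (Nat.succ_ne_zero m) |>.1 h2)
      rw [relEnt_eq_top_of _ _ hne]
      have htop : ∀ i : Fin (m+1), relEnt (marginal v i) q = ⊤ := fun i => by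
        rw [hm i]
        exact relEnt_eq_top_of _ _ (by push_neg; exact ⟨b0, hqb0, hwb0⟩)
      rw [Finset.sum_congr rfl fun i _ => htop i]
      simp

end PerN2

/-- The chain of entropy inequalities
`Σₙ s(n) H(vₙ ‖ q̂ⁿ) ≥ Σₙ s(n) Σᵢ H(v_{n,i} ‖ q̂) ≥ z H(z⁻¹ Σₙ s(n) Σᵢ v_{n,i} ‖ q̂)`,
with equality throughout when the `vₙ` are products of a single measure `w`. -/
theorem stmt18 {𝒳 : Type} [Fintype 𝒳] [Nonempty 𝒳]
    (qhat : 𝒳 → ℝ) (s : ℕ → ℝ) (z : ℝ) (v : (n : ℕ) → (Fin n → 𝒳) → ℝ)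
    (hq : IsProbVec qhat)
    (hs0 : ∀ n, 0 ≤ s n) (hs1 : HasSum s 1)
    (hz : HasSum (fun n : ℕ => (n : ℝ) * s n) z) (hzpos : 0 < z)
    (hv : ∀ n, (∀ y, 0 ≤ v n y) ∧ ∑ y : Fin n → 𝒳, v n y = 1) :
    (∑' n : ℕ, ENNReal.ofReal (s n) * ∑ i : Fin n, relEnt (marginal (v n) i) qhat)
        ≤ ∑' n : ℕ, ENNReal.ofReal (s n) * relEnt (v n) (prodM qhat n) ∧
    ENNReal.ofReal z *
        relEnt (fun b : 𝒳 => z⁻¹ * ∑' n : ℕ, s n * ∑ i : Fin n, marginal (v n) i b) qhat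
      ≤ ∑' n : ℕ, ENNReal.ofReal (s n) * ∑ i : Fin n, relEnt (marginal (v n) i) qhat ∧
    (∀ w : 𝒳 → ℝ, IsProbVec w → (∀ (n : ℕ) (y : Fin n → 𝒳), v n y = ∏ i, w (y i)) →
      (∑' n : ℕ, ENNReal.ofReal (s n) * relEnt (v n) (prodM qhat n)
          = ∑' n : ℕ, ENNReal.ofReal (s n) * ∑ i : Fin n, relEnt (marginal (v n) i) qhat) ∧
      (∑' n : ℕ, ENNReal.ofReal (s n) * ∑ i : Fin n, relEnt (marginal (v n) i) qhat
          = ENNReal.ofReal z *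
              relEnt (fun b : 𝒳 => z⁻¹ * ∑' n : ℕ, s n * ∑ i : Fin n, marginal (v n) i b)
                qhat)) := by
  classical
  have hq0 : ∀ b, 0 ≤ qhat b := hq.1
  have hq1 : ∑ b, qhat b = 1 := ((hasSum_fintype qhat).unique hq.2)
  have hm0 : ∀ (n : ℕ) (i : Fin n) b, 0 ≤ marginal (v n) i b :=
    fun n i b => marginal_nonneg (v n) (hv n).1 i b
  have hm1b : ∀ (n : ℕ) (i : Fin n) b, marginal (v n) i b ≤ 1 := by
    intro n i b
    calc marginal (v n) i b ≤ ∑ b', marginal (v n) i b' :=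
          Finset.single_le_sum (fun b' _ => hm0 n i b') (Finset.mem_univ b)
      _ = 1 := (marginal_sum (v n) i).trans (hv n).2
  refine ⟨?_, ?_, ?_⟩
  · exact ENNReal.tsum_le_tsum fun n => mul_le_mul_right
      (relEnt_marginals_le qhat (v n) (hv n).1 (hv n).2 hq0 hq1) _
  · -- Part 2
    by_cases hP : ∀ (n : ℕ) (i : Fin n), 0 < s n → ∀ b, qhat b = 0 → marginal (v n) i b = 0
    · -- main case
      have hterm_nonneg : ∀ (n : ℕ) (b : 𝒳), 0 ≤ s n * ∑ i : Fin n, marginal (v n) i b :=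
        fun n b => mul_nonneg (hs0 n) (Finset.sum_nonneg fun i _ => hm0 n i b)
      have hterm_le : ∀ (n : ℕ) (b : 𝒳),
          s n * ∑ i : Fin n, marginal (v n) i b ≤ (n : ℝ) * s n := by
        intro n b
        have h1 : ∑ i : Fin n, marginal (v n) i b ≤ (n : ℝ) := by
          calc ∑ i : Fin n, marginal (v n) i b ≤ ∑ _i : Fin n, (1:ℝ) :=
                Finset.sum_le_sum fun i _ => hm1b n i b
            _ = (n : ℝ) := by simp
        calc s n * ∑ i : Fin n, marginal (v n) i b ≤ s n * (n:ℝ) :=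
              mul_le_mul_of_nonneg_left h1 (hs0 n)
          _ = (n:ℝ) * s n := mul_comm _ _
      have hsummable : ∀ b, Summable (fun n : ℕ => s n * ∑ i : Fin n, marginal (v n) i b) :=
        fun b => Summable.of_nonneg_of_le (fun n => hterm_nonneg n b)
          (fun n => hterm_le n b) hz.summable
      have hν0 : ∀ b, 0 ≤ z⁻¹ * ∑' n : ℕ, s n * ∑ i : Fin n, marginal (v n) i b :=
        fun b => mul_nonneg (inv_nonneg.2 hzpos.le)
          (tsum_nonneg fun n => hterm_nonneg n b)
      have hzero : ∀ b, qhat b = 0 →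
          ∀ n : ℕ, s n * ∑ i : Fin n, marginal (v n) i b = 0 := by
        intro b hb n
        rcases eq_or_lt_of_le (hs0 n) with h0 | h0
        · rw [← h0, zero_mul]
        · rw [Finset.sum_congr rfl fun i _ => hP n i h0 b hb]
          simp
      have acν : ∀ b, qhat b = 0 →
          (z⁻¹ * ∑' n : ℕ, s n * ∑ i : Fin n, marginal (v n) i b) = 0 := by
        intro b hb
        rw [tsum_congr (hzero b hb), tsum_zero, mul_zero]
      rw [relEnt_fintype _ qhat hν0 hq0 acν]
      rw [← ENNReal.ofReal_mul hzpos.le, Finset.mul_sum,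
        ENNReal.ofReal_sum_of_nonneg (fun b _ => mul_nonneg hzpos.le
          (phi_nonneg (hν0 b) (hq0 b) (acν b)))]
      -- rewrite the RHS as a triple sum of phi's
      have hterm : ∀ n : ℕ, ENNReal.ofReal (s n) * ∑ i : Fin n, relEnt (marginal (v n) i) qhat
          = ∑ b, ∑ i : Fin n,
              ENNReal.ofReal (phi (s n * marginal (v n) i b) (s n * qhat b)) := by
        intro n
        rcases eq_or_lt_of_le (hs0 n) with h0 | h0
        · rw [← h0]
          simp [phi_zero_zero]
        · have acm : ∀ (i : Fin n) b, qhat b = 0 → marginal (v n) i b = 0 :=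
            fun i b hb => hP n i h0 b hb
          rw [Finset.sum_congr rfl fun (i : Fin n) _ =>
            relEnt_fintype (marginal (v n) i) qhat (hm0 n i) hq0 (acm i)]
          rw [Finset.mul_sum]
          rw [Finset.sum_congr rfl fun (i : Fin n) _ => by
            rw [← ENNReal.ofReal_mul (hs0 n), Finset.mul_sum,
              ENNReal.ofReal_sum_of_nonneg (fun b _ => mul_nonneg (hs0 n)
                (phi_nonneg (hm0 n i b) (hq0 b) (acm i b))),
              Finset.sum_congr rfl fun b _ => by rw [phi_smul h0 _ _]]]
          exact Finset.sum_comm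
      rw [tsum_congr hterm, Summable.tsum_finsetSum (fun b _ => ENNReal.summable)]
      refine Finset.sum_le_sum fun b _ => ?_
      -- pointwise in b : apply logSum on the sigma type
      set F : (Σ n : ℕ, Fin n) → ℝ := fun p => s p.1 * marginal (v p.1) p.2 b with hF
      set G : (Σ n : ℕ, Fin n) → ℝ := fun p => s p.1 * qhat b with hG
      have hFnn : ∀ p, 0 ≤ F p := fun p => mul_nonneg (hs0 p.1) (hm0 p.1 p.2 b)
      have hGnn : ∀ p, 0 ≤ G p := fun p => mul_nonneg (hs0 p.1) (hq0 b)
      have hFG : ∀ p, G p = 0 → F p = 0 := by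
        intro p hp
        rcases mul_eq_zero.1 hp with h | h
        · simp [hF, h]
        · rcases eq_or_lt_of_le (hs0 p.1) with h0 | h0
          · simp [hF, ← h0]
          · simp [hF, hP p.1 p.2 h0 b h]
      have hfibF : ∀ n : ℕ, HasSum (fun i : Fin n => F ⟨n, i⟩)
          (s n * ∑ i : Fin n, marginal (v n) i b) := by
        intro n
        have := hasSum_fintype (fun i : Fin n => F ⟨n, i⟩)
        rwa [show ∑ i : Fin n, F ⟨n, i⟩ = s n * ∑ i : Fin n, marginal (v n) i b by
          rw [Finset.mul_sum]] at this
      have hFs : Summable F := by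
        refine (summable_sigma_of_nonneg hFnn).2 ⟨fun n => (hfibF n).summable, ?_⟩
        refine Summable.congr (hsummable b) fun n => ?_
        exact ((hfibF n).tsum_eq).symm
      have hA : HasSum F (∑' n : ℕ, s n * ∑ i : Fin n, marginal (v n) i b) :=
        HasSum.sigma_of_hasSum ((hsummable b).hasSum) hfibF hFs
      have hfibG : ∀ n : ℕ, HasSum (fun i : Fin n => G ⟨n, i⟩) ((n : ℝ) * s n * qhat b) := by
        intro n
        have := hasSum_fintype (fun i : Fin n => G ⟨n, i⟩)
        rwa [show ∑ _i : Fin n, G ⟨n, _i⟩ = (n:ℝ) * s n * qhat b by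
          simp [hG, Finset.sum_const]; ring] at this
      have hGz : HasSum (fun n : ℕ => (n : ℝ) * s n * qhat b) (z * qhat b) := by
        simpa [mul_assoc] using hz.mul_right (qhat b)
      have hGs : Summable G := by
        refine (summable_sigma_of_nonneg hGnn).2 ⟨fun n => (hfibG n).summable, ?_⟩
        refine Summable.congr hGz.summable fun n => ?_
        exact ((hfibG n).tsum_eq).symm
      have hC : HasSum G (z * qhat b) := HasSum.sigma_of_hasSum hGz hfibG hGs
      have hls := logSum F G hFnn hGnn hFG hA hC
      have hz2 : z * phi (z⁻¹ * ∑' n : ℕ, s n * ∑ i : Fin n, marginal (v n) i b) (qhat b)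
          = phi (∑' n : ℕ, s n * ∑ i : Fin n, marginal (v n) i b) (z * qhat b) := by
        rw [phi_smul hzpos, mul_inv_cancel_left₀ hzpos.ne']
      rw [hz2]
      refine le_trans hls ?_
      rw [ENNReal.tsum_sigma' (fun p => ENNReal.ofReal (phi (F p) (G p)))]
      exact le_of_eq (tsum_congr fun n => tsum_fintype _)
    · -- some relEnt of a marginal is ⊤ with positive weight
      push_neg at hP
      obtain ⟨n, i, hsn, b, hb, hmb⟩ := hP
      have h1 : relEnt (marginal (v n) i) qhat = ⊤ :=
        relEnt_eq_top_of _ _ (by push_neg; exact ⟨b, hb, hmb⟩)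
      have h2 : ENNReal.ofReal (s n) * ∑ i' : Fin n, relEnt (marginal (v n) i') qhat = ⊤ := by
        have hle : (⊤:ℝ≥0∞) ≤ ∑ i' : Fin n, relEnt (marginal (v n) i') qhat := by
          rw [← h1]
          exact Finset.single_le_sum (f := fun i' : Fin n => relEnt (marginal (v n) i') qhat)
            (fun _ _ => zero_le) (Finset.mem_univ i)
        rw [top_le_iff.1 hle, ENNReal.mul_top]
        simp only [ne_eq, ENNReal.ofReal_eq_zero, not_le]
        exact hsn
      have h3 := ENNReal.le_tsum (f := fun n : ℕ =>
        ENNReal.ofReal (s n) * ∑ i' : Fin n, relEnt (marginal (v n) i') qhat) n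
      rw [h2] at h3
      exact le_trans le_top h3
  · -- Part 3
    intro w hw hprod
    have hw0 : ∀ b, 0 ≤ w b := hw.1
    have hw1 : ∑ b, w b = 1 := ((hasSum_fintype w).unique hw.2)
    have hmw : ∀ (n : ℕ) (i : Fin n), marginal (v n) i = w := by
      intro n i
      have hvn : v n = fun y => ∏ j, w (y j) := funext (hprod n)
      rw [hvn]; exact marginal_prod w hw1 i
    constructor
    · exact tsum_congr fun n => by
        rw [relEnt_prod_eq qhat (v n) w hw0 hw1 hq0 hq1 (hprod n)]
    · have hνw : (fun b : 𝒳 => z⁻¹ * ∑' n : ℕ, s n * ∑ i : Fin n, marginal (v n) i b) = w := by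
        funext b
        have h1 : ∀ n : ℕ, s n * ∑ i : Fin n, marginal (v n) i b = ((n:ℝ) * s n) * w b := by
          intro n
          rw [Finset.sum_congr rfl fun (i : Fin n) _ => by rw [hmw n i]]
          simp [Finset.sum_const]
          ring
        rw [tsum_congr h1, (hz.mul_right (w b)).tsum_eq, inv_mul_cancel_left₀ hzpos.ne']
      rw [hνw]
      have hsum_i : ∀ n : ℕ, ∑ i : Fin n, relEnt (marginal (v n) i) qhat
          = (n : ℝ≥0∞) * relEnt w qhat := by
        intro n
        rw [Finset.sum_congr rfl fun (i : Fin n) _ => by rw [hmw n i]]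
        simp [Finset.sum_const]
      rw [tsum_congr fun n => by rw [hsum_i n]]
      by_cases hacw : ∀ b, qhat b = 0 → w b = 0
      · have hE : relEnt w qhat = ENNReal.ofReal (∑ b, phi (w b) (qhat b)) :=
          relEnt_fintype w qhat hw0 hq0 hacw
        have hstep : ∀ n : ℕ, ENNReal.ofReal (s n) * ((n : ℝ≥0∞) * relEnt w qhat)
            = ENNReal.ofReal ((n:ℝ) * s n) * relEnt w qhat := by
          intro n
          rw [← mul_assoc, ← ENNReal.ofReal_natCast n, ← ENNReal.ofReal_mul (hs0 n),
            mul_comm (s n) ((n:ℝ))]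
        rw [tsum_congr hstep, ENNReal.tsum_mul_right]
        congr 1
        rw [← ENNReal.ofReal_tsum_of_nonneg (fun n => mul_nonneg (Nat.cast_nonneg n) (hs0 n))
          hz.summable, hz.tsum_eq]
      · have hwtop : relEnt w qhat = ⊤ := by
          apply relEnt_eq_top_of
          push_neg at hacw ⊢
          exact hacw
        have hex : ∃ n : ℕ, 0 < (n:ℝ) * s n := by
          by_contra h
          push_neg at h
          have : z ≤ 0 := hasSum_le (fun n => h n) hz hasSum_zero
          linarith
        obtain ⟨n0, hn0⟩ := hex
        have hn0' : (0:ℝ) < s n0 := by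
          rcases eq_or_lt_of_le (hs0 n0) with h0 | h0
          · rw [← h0, mul_zero] at hn0; linarith
          · exact h0
        have hnn0 : (n0:ℝ) ≠ 0 := by
          intro h; rw [h, zero_mul] at hn0; linarith
        have hn0ne : (n0 : ℝ≥0∞) ≠ 0 := Nat.cast_ne_zero.2 (Nat.cast_ne_zero.1 hnn0)
        have hterm : ENNReal.ofReal (s n0) * ((n0 : ℝ≥0∞) * relEnt w qhat) = ⊤ := by
          rw [hwtop, ENNReal.mul_top hn0ne, ENNReal.mul_top (by
            simp only [ne_eq, ENNReal.ofReal_eq_zero, not_le]; exact hn0')]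
        have hL : (∑' n : ℕ, ENNReal.ofReal (s n) * ((n : ℝ≥0∞) * relEnt w qhat)) = ⊤ := by
          have := ENNReal.le_tsum (f := fun n : ℕ =>
            ENNReal.ofReal (s n) * ((n : ℝ≥0∞) * relEnt w qhat)) n0
          rw [hterm] at this
          exact top_le_iff.1 this
        rw [hL, hwtop, ENNReal.mul_top]
        simp only [ne_eq, ENNReal.ofReal_eq_zero, not_le]
        exact hzpos

end GWLD
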